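/- Conservation of discrete momentum for the modified semi-discrete discontinuous Galerkin scheme: if (C_0,…,C_{N_H−1}, E, Φ) solves the semi-discrete DG scheme with the DG Poisson solver, then t ↦ ∫_0^L C_1(t,x) dx is constant in t, i.e. d/dt ∫_0^L C_1(t,x) dx = 0. -/

import Mathlib

open MeasureTheory Finset

noncomputable section

/-- Left (minus) one-sided limit of the piecewise polynomial with cell
polynomials `u 0, …, u (Nx−1)` at the interface `x_{i+1/2} = X i`
(interfaces `i = 0` and `i = Nx` are identified periodically). -/
def dgMinus (Nx : ℕ) (X : ℕ → ℝ) (u : ℕ → Polynomial ℝ) (i : ℕ) : ℝ :=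
  if i = 0 then (u (Nx - 1)).eval (X Nx) else (u (i - 1)).eval (X i)

/-- Right (plus) one-sided limit at the interface `X i` (periodic). -/
def dgPlus (Nx : ℕ) (X : ℕ → ℝ) (u : ℕ → Polynomial ℝ) (i : ℕ) : ℝ :=
  if i = Nx then (u 0).eval (X 0) else (u i).eval (X i)

/-- Jump `[u] = u⁺ − u⁻` at the interface `X i`. -/
def dgJump (Nx : ℕ) (X : ℕ → ℝ) (u : ℕ → Polynomial ℝ) (i : ℕ) : ℝ :=
  dgPlus Nx X u i - dgMinus Nx X u i

/-- Average `{u} = (u⁺ + u⁻)/2` at the interface `X i`. -/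
def dgAvg (Nx : ℕ) (X : ℕ → ℝ) (u : ℕ → Polynomial ℝ) (i : ℕ) : ℝ :=
  (dgPlus Nx X u i + dgMinus Nx X u i) / 2

/-- Integral over the cell `I_j = (X j, X (j+1))`. -/
def cellInt (X : ℕ → ℝ) (j : ℕ) (f : ℝ → ℝ) : ℝ :=
  ∫ x in (X j)..(X (j + 1)), f x

/-- `g_n = v_th (√(n+1) C_{n+1} + √n C_{n−1})` on each cell (the convention
`C_{−1} = 0` is handled by `√0 = 0` and truncated subtraction). -/
def dgG (vth : ℝ) (Cf : ℕ → ℕ → Polynomial ℝ) (n j : ℕ) : Polynomial ℝ :=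
  vth • (Real.sqrt (n + 1) • Cf (n + 1) j + Real.sqrt n • Cf (n - 1) j)

/-- Global Lax–Friedrichs flux
`ĝ_n = (1/2)(g_n⁻ + g_n⁺ − α (C_n⁺ − C_n⁻))` with `α = v_th √N_H`. -/
def dgGhat (vth : ℝ) (NH Nx : ℕ) (X : ℕ → ℝ) (Cf : ℕ → ℕ → Polynomial ℝ)
    (n i : ℕ) : ℝ :=
  (1 / 2) * (dgMinus Nx X (dgG vth Cf n) i + dgPlus Nx X (dgG vth Cf n) i
    - vth * Real.sqrt NH *
        (dgPlus Nx X (Cf n) i - dgMinus Nx X (Cf n) i))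

/-- `Ĉ_1 = ĝ_0 / v_th`. -/
def dgC1hat (vth : ℝ) (NH Nx : ℕ) (X : ℕ → ℝ) (Cf : ℕ → ℕ → Polynomial ℝ)
    (i : ℕ) : ℝ :=
  dgGhat vth NH Nx X Cf 0 i / vth

/-- The convective DG form
`a_n^j(g_n, φ) = −∫_{I_j} g_n φ' + ĝ_{n,j+1/2} φ(x_{j+1/2}⁻) − ĝ_{n,j−1/2} φ(x_{j−1/2}⁺)`. -/
def dgA (vth : ℝ) (NH Nx : ℕ) (X : ℕ → ℝ) (Cf : ℕ → ℕ → Polynomial ℝ)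
    (n j : ℕ) (φ : Polynomial ℝ) : ℝ :=
  -(cellInt X j fun x => (dgG vth Cf n j).eval x * φ.derivative.eval x)
    + dgGhat vth NH Nx X Cf n (j + 1) * φ.eval (X (j + 1))
    - dgGhat vth NH Nx X Cf n j * φ.eval (X j)

/-- The residual `⟨r_1^j, φ⟩`. -/
def dgR1 (vth β : ℝ) (Nx : ℕ) (X : ℕ → ℝ) (Ef Φf : ℕ → Polynomial ℝ)
    (j : ℕ) (φ : Polynomial ℝ) : ℝ :=
  -(β / (2 * vth ^ 2)) *
    ((dgJump Nx X Φf j * dgJump Nx X Ef j) * φ.eval (X j)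
      + (dgJump Nx X Φf (j + 1) * dgJump Nx X Ef (j + 1)) * φ.eval (X (j + 1)))

/-- The residual `⟨r_2^j, φ⟩`. -/
def dgR2 (vth : ℝ) (NH Nx : ℕ) (X : ℕ → ℝ) (Cf : ℕ → ℕ → Polynomial ℝ)
    (Φf : ℕ → Polynomial ℝ) (j : ℕ) (φ : Polynomial ℝ) : ℝ :=
  (1 / (Real.sqrt 2 * vth)) *
    ((dgAvg Nx X (Cf 1) j - dgC1hat vth NH Nx X Cf j) * dgJump Nx X Φf j *
        φ.eval (X j)
      + (dgAvg Nx X (Cf 1) (j + 1) - dgC1hat vth NH Nx X Cf (j + 1)) *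
          dgJump Nx X Φf (j + 1) * φ.eval (X (j + 1)))

/-- The residual `⟨r_n^j, φ⟩` (zero for `n ∉ {1, 2}`). -/
def dgR (vth β : ℝ) (NH Nx : ℕ) (X : ℕ → ℝ) (Cf : ℕ → ℕ → Polynomial ℝ)
    (Ef Φf : ℕ → Polynomial ℝ) (n j : ℕ) (φ : Polynomial ℝ) : ℝ :=
  if n = 1 then dgR1 vth β Nx X Ef Φf j φ
  else if n = 2 then dgR2 vth NH Nx X Cf Φf j φ
  else 0

/-- The source form `b_n^j(C, E, Φ, φ) = −(√n/v_th) ∫_{I_j} E C_{n−1} φ − ⟨r_n^j, φ⟩`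
(for `n = 0` this is `0` since `√0 = 0` and `r_0 = 0`). -/
def dgB (vth β : ℝ) (NH Nx : ℕ) (X : ℕ → ℝ) (Cf : ℕ → ℕ → Polynomial ℝ)
    (Ef Φf : ℕ → Polynomial ℝ) (n j : ℕ) (φ : Polynomial ℝ) : ℝ :=
  -(Real.sqrt n / vth) *
      (cellInt X j fun x => (Ef j).eval x * (Cf (n - 1) j).eval x * φ.eval x)
    - dgR vth β NH Nx X Cf Ef Φf n j φ

/-- The local DG scheme for the Poisson equation with source `C_0`, with
fluxes `Φ̂ = {Φ}` and `Ê = {E} − β [Φ]`. -/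
def dgPoisson (vth ρ0 β : ℝ) (k Nx : ℕ) (X : ℕ → ℝ)
    (C0f Ef Φf : ℕ → Polynomial ℝ) : Prop :=
  ∀ j < Nx, ∀ ψ : Polynomial ℝ, ψ.natDegree ≤ k →
    ((cellInt X j fun x => (Φf j).eval x * ψ.derivative.eval x)
        - dgAvg Nx X Φf (j + 1) * ψ.eval (X (j + 1))
        + dgAvg Nx X Φf j * ψ.eval (X j)
      = cellInt X j fun x => (Ef j).eval x * ψ.eval x)
    ∧ (-(cellInt X j fun x => (Ef j).eval x * ψ.derivative.eval x)
        + (dgAvg Nx X Ef (j + 1) - β * dgJump Nx X Φf (j + 1)) *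
            ψ.eval (X (j + 1))
        - (dgAvg Nx X Ef j - β * dgJump Nx X Φf j) * ψ.eval (X j)
      = cellInt X j fun x => (vth * (C0f j).eval x - ρ0) * ψ.eval x)

/-- `∫_0^L u dx` for a piecewise polynomial `u`. -/
def dgTotInt (Nx : ℕ) (X : ℕ → ℝ) (u : ℕ → Polynomial ℝ) : ℝ :=
  ∑ j ∈ Finset.range Nx, cellInt X j fun x => (u j).eval x

/-- The discrete total energy
`ℰ_h = (1/2) ∫_0^L [v_th³(√2 C_2 + C_0) + E²] dx + (β/2) Σ_j [Φ]_{j−1/2}²`. -/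
def dgEnergy (vth β : ℝ) (Nx : ℕ) (X : ℕ → ℝ) (Cf : ℕ → ℕ → Polynomial ℝ)
    (Ef Φf : ℕ → Polynomial ℝ) : ℝ :=
  (1 / 2) * ∑ j ∈ Finset.range Nx,
      (cellInt X j fun x =>
        vth ^ 3 * (Real.sqrt 2 * (Cf 2 j).eval x + (Cf 0 j).eval x)
          + ((Ef j).eval x) ^ 2)
    + (β / 2) * ∑ j ∈ Finset.range Nx, (dgJump Nx X Φf j) ^ 2

end


section AuxMomentum

lemma cellInt_zero (X : ℕ → ℝ) (j : ℕ) : cellInt X j (fun _ => (0:ℝ)) = 0 := by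
  unfold cellInt; simp

lemma sum_shift_of_periodic {Nx : ℕ} (f : ℕ → ℝ) (hf : f Nx = f 0) :
    ∑ j ∈ Finset.range Nx, f (j + 1) = ∑ j ∈ Finset.range Nx, f j := by
  have h2 : ∑ j ∈ Finset.range Nx, (f (j + 1) - f j) = 0 := by
    rw [Finset.sum_range_sub, hf, sub_self]
  rw [Finset.sum_sub_distrib] at h2
  linarith

lemma dgMinus_periodic {Nx : ℕ} (hNx : 1 ≤ Nx) (X : ℕ → ℝ) (u : ℕ → Polynomial ℝ) :
    dgMinus Nx X u Nx = dgMinus Nx X u 0 := by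
  unfold dgMinus
  rw [if_neg (by omega), if_pos rfl]

lemma dgPlus_periodic {Nx : ℕ} (hNx : 1 ≤ Nx) (X : ℕ → ℝ) (u : ℕ → Polynomial ℝ) :
    dgPlus Nx X u Nx = dgPlus Nx X u 0 := by
  unfold dgPlus
  rw [if_pos rfl, if_neg (by omega)]

lemma dgJump_periodic {Nx : ℕ} (hNx : 1 ≤ Nx) (X : ℕ → ℝ) (u : ℕ → Polynomial ℝ) :
    dgJump Nx X u Nx = dgJump Nx X u 0 := by
  unfold dgJump; rw [dgMinus_periodic hNx, dgPlus_periodic hNx]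

lemma dgAvg_periodic {Nx : ℕ} (hNx : 1 ≤ Nx) (X : ℕ → ℝ) (u : ℕ → Polynomial ℝ) :
    dgAvg Nx X u Nx = dgAvg Nx X u 0 := by
  unfold dgAvg; rw [dgMinus_periodic hNx, dgPlus_periodic hNx]

lemma dgGhat_periodic (vth : ℝ) {NH Nx : ℕ} (hNx : 1 ≤ Nx) (X : ℕ → ℝ)
    (Cf : ℕ → ℕ → Polynomial ℝ) (n : ℕ) :
    dgGhat vth NH Nx X Cf n Nx = dgGhat vth NH Nx X Cf n 0 := by
  unfold dgGhat
  rw [dgMinus_periodic hNx, dgPlus_periodic hNx, dgMinus_periodic hNx, dgPlus_periodic hNx]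

lemma integral_eval_mul_deriv (p : Polynomial ℝ) (a b : ℝ) :
    (∫ x in a..b, p.eval x * p.derivative.eval x)
      = (p.eval b ^ 2 - p.eval a ^ 2) / 2 := by
  have h : ∀ x ∈ Set.uIcc a b,
      HasDerivAt (fun y => p.eval y ^ 2 / 2) (p.eval x * p.derivative.eval x) x := by
    intro x _
    have h1 : HasDerivAt (fun y => p.eval y ^ 2 / 2)
        ((2 : ℕ) * p.eval x ^ (2 - 1) * p.derivative.eval x / 2) x :=
      ((p.hasDerivAt x).fun_pow 2).div_const 2
    convert h1 using 1
    simp; ring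
  rw [intervalIntegral.integral_eq_sub_of_hasDerivAt h
    ((p.continuous.mul p.derivative.continuous).intervalIntegrable _ _)]
  ring

/-- The key Poisson identity: testing the `E`-equation with `ζ = E` and the
`Φ`-equation with `ψ = 1` yields `∫ E C₀ = (β/v_th) Σ [Φ][E]`. -/
lemma poisson_eField_identity (vth ρ0 β : ℝ) (hvth : vth ≠ 0) (k Nx : ℕ) (hNx : 1 ≤ Nx)
    (X : ℕ → ℝ) (C0f Ef Φf : ℕ → Polynomial ℝ)
    (hdegE : ∀ j, (Ef j).natDegree ≤ k)
    (hP : dgPoisson vth ρ0 β k Nx X C0f Ef Φf) :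
    ∑ j ∈ Finset.range Nx, (cellInt X j fun x => (Ef j).eval x * (C0f j).eval x)
      = (β / vth) * ∑ j ∈ Finset.range Nx, dgJump Nx X Φf j * dgJump Nx X Ef j := by
  set Fm : ℕ → ℝ := fun i =>
    -(dgMinus Nx X Ef i ^ 2 / 2)
      + (dgAvg Nx X Ef i - β * dgJump Nx X Φf i) * dgMinus Nx X Ef i
      - ρ0 * dgAvg Nx X Φf i with hFm
  set Fp : ℕ → ℝ := fun i =>
    -(dgPlus Nx X Ef i ^ 2 / 2)
      + (dgAvg Nx X Ef i - β * dgJump Nx X Φf i) * dgPlus Nx X Ef i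
      - ρ0 * dgAvg Nx X Φf i with hFp
  have key : ∀ j < Nx, vth * (cellInt X j fun x => (Ef j).eval x * (C0f j).eval x)
      = Fm (j + 1) - Fp j := by
    intro j hj
    have h2 := (hP j hj (Ef j) (hdegE j)).2
    have h1 := (hP j hj 1 (by simp)).1
    simp only [Polynomial.derivative_one, Polynomial.eval_zero, mul_zero,
      Polynomial.eval_one, mul_one] at h1
    rw [cellInt_zero] at h1
    -- h1 : 0 - AΦ(j+1) + AΦ j = ∫ E
    have hEE : (cellInt X j fun x => (Ef j).eval x * (Ef j).derivative.eval x)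
        = ((Ef j).eval (X (j + 1)) ^ 2 - (Ef j).eval (X j) ^ 2) / 2 := by
      unfold cellInt
      exact integral_eval_mul_deriv _ _ _
    have hsplit : (cellInt X j fun x => (vth * (C0f j).eval x - ρ0) * (Ef j).eval x)
        = vth * (cellInt X j fun x => (Ef j).eval x * (C0f j).eval x)
          - ρ0 * (cellInt X j fun x => (Ef j).eval x) := by
      unfold cellInt
      rw [show (fun x => (vth * (C0f j).eval x - ρ0) * (Ef j).eval x)
          = fun x => vth * ((Ef j).eval x * (C0f j).eval x) - ρ0 * (Ef j).eval x from by
        funext x; ring]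
      rw [intervalIntegral.integral_sub, intervalIntegral.integral_const_mul,
        intervalIntegral.integral_const_mul]
      · exact (continuous_const.mul
          ((Ef j).continuous.mul (C0f j).continuous)).intervalIntegrable _ _
      · exact (continuous_const.mul (Ef j).continuous).intervalIntegrable _ _
    have hm : dgMinus Nx X Ef (j + 1) = (Ef j).eval (X (j + 1)) := by
      unfold dgMinus; rw [if_neg (by omega)]; simp
    have hp : dgPlus Nx X Ef j = (Ef j).eval (X j) := by
      unfold dgPlus; rw [if_neg (by omega)]
    rw [hEE, hsplit] at h2
    simp only [hFm, hFp, hm, hp]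
    linear_combination -h2 - ρ0 * h1
  have hsum : vth * ∑ j ∈ Finset.range Nx,
      (cellInt X j fun x => (Ef j).eval x * (C0f j).eval x)
      = ∑ j ∈ Finset.range Nx, (Fm (j + 1) - Fp j) := by
    rw [Finset.mul_sum]
    exact Finset.sum_congr rfl fun j hj => key j (Finset.mem_range.mp hj)
  have hFmper : Fm Nx = Fm 0 := by
    simp only [hFm]
    rw [dgMinus_periodic hNx, dgAvg_periodic hNx, dgJump_periodic hNx, dgAvg_periodic hNx]
  have hshift : ∑ j ∈ Finset.range Nx, Fm (j + 1) = ∑ j ∈ Finset.range Nx, Fm j :=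
    sum_shift_of_periodic Fm hFmper
  have hterm : ∀ j, Fm j - Fp j = β * (dgJump Nx X Φf j * dgJump Nx X Ef j) := by
    intro j
    simp only [hFm, hFp, dgJump, dgAvg]
    ring
  have hfin : vth * ∑ j ∈ Finset.range Nx,
      (cellInt X j fun x => (Ef j).eval x * (C0f j).eval x)
      = β * ∑ j ∈ Finset.range Nx, dgJump Nx X Φf j * dgJump Nx X Ef j := by
    rw [hsum, Finset.sum_sub_distrib, hshift, ← Finset.sum_sub_distrib]
    rw [Finset.mul_sum]
    exact Finset.sum_congr rfl fun j _ => hterm j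
  field_simp
  linarith

end AuxMomentum

/-- Conservation of the discrete momentum for the modified semi-discrete
discontinuous Galerkin scheme: `t ↦ ∫_0^L C_1(t,x) dx` is constant. -/
theorem dg_semidiscrete_momentum_conservation
    (L vth ρ0 β : ℝ) (k Nx NH : ℕ)
    (hL : 0 < L) (hvth : 0 < vth) (hβ : 0 < β) (hNx : 1 ≤ Nx) (hNH : 3 ≤ NH)
    -- the partition `0 = x_{1/2} < … < x_{Nx+1/2} = L`
    (X : ℕ → ℝ) (hX0 : X 0 = 0) (hXL : X Nx = L)
    (hXmono : ∀ j < Nx, X j < X (j + 1))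
    -- the numerical solution, cell by cell
    (C : ℕ → ℝ → ℕ → Polynomial ℝ) (E Φ : ℝ → ℕ → Polynomial ℝ)
    -- membership in `V_h^k`
    (hdegC : ∀ n t j, (C n t j).natDegree ≤ k)
    (hdegE : ∀ t j, (E t j).natDegree ≤ k)
    (hdegΦ : ∀ t j, (Φ t j).natDegree ≤ k)
    -- truncation convention `C_{N_H} = 0` (and beyond)
    (hCtop : ∀ n, NH ≤ n → ∀ t j, C n t j = 0)
    -- C¹ regularity in time
    (hC1 : ∀ n j (φ : Polynomial ℝ),
      Differentiable ℝ fun t => cellInt X j fun x => (C n t j).eval x * φ.eval x)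
    -- the modified semi-discrete DG scheme
    (hScheme : ∀ t : ℝ, ∀ n < NH, ∀ j < Nx, ∀ φ : Polynomial ℝ, φ.natDegree ≤ k →
      deriv (fun s => cellInt X j fun x => (C n s j).eval x * φ.eval x) t
        + dgA vth NH Nx X (fun m i => C m t i) n j φ
        + dgB vth β NH Nx X (fun m i => C m t i) (E t) (Φ t) n j φ = 0)
    -- the DG Poisson solver
    (hPoisson : ∀ t : ℝ, dgPoisson vth ρ0 β k Nx X (C 0 t) (E t) (Φ t)) :
    ∀ t : ℝ, dgTotInt Nx X (C 1 t) = dgTotInt Nx X (C 1 0) := by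
  have hvth' : vth ≠ 0 := ne_of_gt hvth
  set F : ℝ → ℝ := fun s => ∑ j ∈ Finset.range Nx,
    cellInt X j fun x => (C 1 s j).eval x * (1 : Polynomial ℝ).eval x with hF
  have hFtot : ∀ s, dgTotInt Nx X (C 1 s) = F s := by
    intro s
    unfold dgTotInt
    refine Finset.sum_congr rfl fun j _ => ?_
    unfold cellInt
    simp
  have hdiff : ∀ j, Differentiable ℝ fun s =>
      cellInt X j fun x => (C 1 s j).eval x * (1 : Polynomial ℝ).eval x :=
    fun j => hC1 1 j 1
  have hFdiff : Differentiable ℝ F := by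
    intro s
    exact DifferentiableAt.fun_sum fun j _ => (hdiff j).differentiableAt
  have hderiv0 : ∀ s, deriv F s = 0 := by
    intro s
    have hd : deriv F s = ∑ j ∈ Finset.range Nx,
        deriv (fun s' => cellInt X j fun x => (C 1 s' j).eval x * (1 : Polynomial ℝ).eval x) s := by
      rw [hF]
      exact deriv_fun_sum fun j _ => (hdiff j).differentiableAt
    have hsch : ∀ j ∈ Finset.range Nx,
        deriv (fun s' => cellInt X j fun x => (C 1 s' j).eval x * (1 : Polynomial ℝ).eval x) s
        = -(dgA vth NH Nx X (fun m i => C m s i) 1 j 1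
            + dgB vth β NH Nx X (fun m i => C m s i) (E s) (Φ s) 1 j 1) := by
      intro j hj
      have := hScheme s 1 (by omega) j (Finset.mem_range.mp hj) 1 (by simp)
      linarith
    rw [hd, Finset.sum_congr rfl hsch]
    -- split the sum
    have hA : ∀ j, dgA vth NH Nx X (fun m i => C m s i) 1 j 1
        = dgGhat vth NH Nx X (fun m i => C m s i) 1 (j + 1)
          - dgGhat vth NH Nx X (fun m i => C m s i) 1 j := by
      intro j
      unfold dgA
      simp only [Polynomial.derivative_one, Polynomial.eval_zero, mul_zero,
        Polynomial.eval_one, mul_one]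
      rw [cellInt_zero]
      ring
    have hAsum : ∑ j ∈ Finset.range Nx, dgA vth NH Nx X (fun m i => C m s i) 1 j 1 = 0 := by
      rw [Finset.sum_congr rfl fun j _ => hA j, Finset.sum_range_sub,
        dgGhat_periodic vth hNx, sub_self]
    have hB : ∀ j, dgB vth β NH Nx X (fun m i => C m s i) (E s) (Φ s) 1 j 1
        = -(1 / vth) * (cellInt X j fun x => (E s j).eval x * (C 0 s j).eval x)
          - dgR1 vth β Nx X (E s) (Φ s) j 1 := by
      intro j
      unfold dgB dgR
      simp only [Nat.cast_one, Real.sqrt_one, Nat.sub_self, if_pos rfl, if_true, reduceIte]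
      have : (cellInt X j fun x => (E s j).eval x * (C 0 s j).eval x
            * (1 : Polynomial ℝ).eval x)
          = cellInt X j fun x => (E s j).eval x * (C 0 s j).eval x := by
        unfold cellInt
        simp
      rw [this]
      try ring
    set S : ℝ := ∑ j ∈ Finset.range Nx, dgJump Nx X (Φ s) j * dgJump Nx X (E s) j with hS
    have hT : ∑ j ∈ Finset.range Nx,
        (cellInt X j fun x => (E s j).eval x * (C 0 s j).eval x) = (β / vth) * S :=
      poisson_eField_identity vth ρ0 β hvth' k Nx hNx X (C 0 s) (E s) (Φ s)
        (hdegE s) (hPoisson s)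
    have hR1 : ∀ j, dgR1 vth β Nx X (E s) (Φ s) j 1
        = -(β / (2 * vth ^ 2)) * (dgJump Nx X (Φ s) j * dgJump Nx X (E s) j
            + dgJump Nx X (Φ s) (j + 1) * dgJump Nx X (E s) (j + 1)) := by
      intro j
      unfold dgR1
      simp
    have hR1sum : ∑ j ∈ Finset.range Nx, dgR1 vth β Nx X (E s) (Φ s) j 1
        = -(β / vth ^ 2) * S := by
      rw [Finset.sum_congr rfl fun j _ => hR1 j]
      have hshift : ∑ j ∈ Finset.range Nx,
          dgJump Nx X (Φ s) (j + 1) * dgJump Nx X (E s) (j + 1) = S := by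
        rw [hS]
        exact sum_shift_of_periodic
          (fun i => dgJump Nx X (Φ s) i * dgJump Nx X (E s) i)
          (by show dgJump Nx X (Φ s) Nx * dgJump Nx X (E s) Nx
                = dgJump Nx X (Φ s) 0 * dgJump Nx X (E s) 0
              rw [dgJump_periodic hNx, dgJump_periodic hNx])
      rw [← Finset.mul_sum, Finset.sum_add_distrib, hshift, ← hS]
      ring
    have hBsum : ∑ j ∈ Finset.range Nx,
        dgB vth β NH Nx X (fun m i => C m s i) (E s) (Φ s) 1 j 1 = 0 := by
      rw [Finset.sum_congr rfl fun j _ => hB j, Finset.sum_sub_distrib,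
        ← Finset.mul_sum, hT, hR1sum]
      field_simp
      ring
    have : ∑ j ∈ Finset.range Nx,
        -(dgA vth NH Nx X (fun m i => C m s i) 1 j 1
          + dgB vth β NH Nx X (fun m i => C m s i) (E s) (Φ s) 1 j 1)
        = -((∑ j ∈ Finset.range Nx, dgA vth NH Nx X (fun m i => C m s i) 1 j 1)
          + ∑ j ∈ Finset.range Nx,
              dgB vth β NH Nx X (fun m i => C m s i) (E s) (Φ s) 1 j 1) := by
      rw [← Finset.sum_add_distrib, Finset.sum_neg_distrib]
    rw [this, hAsum, hBsum]
    ring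
  intro t
  rw [hFtot t, hFtot 0]
  exact is_const_of_deriv_eq_zero hFdiff hderiv0 t 0
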